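/- arXiv:2507.14464 — 4 statements merged into one kernel-verified Lean document; each statement's English description precedes it below -/
import Mathlib

section
/- Let A ∈ ℤ^{k×r} be an integer matrix with columns a_1, …, a_r ∈ ℤ^k, and let φ_A : ℝ[X_1,…,X_r] → ℝ[ℤ^k] be the ℝ-algebra homomorphism from the polynomial ring in r variables to the group algebra of ℤ^k sending X_j to the Laurent monomial with exponent vector a_j. Then the toric ideal I_A := ker φ_A is equal to the ideal generated by the set of binomials {X^u − X^v : u, v ∈ ℕ^r and A u = A v}, where X^u denotes the monomial ∏_j X_j^{u_j}. In particular, I_A is a binomial ideal. -/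
open MvPolynomial

/-- **The toric ideal is generated by binomials.**
For an integer matrix `A ∈ ℤ^{k×r}`, the kernel of the monomial map
`φ_A : ℝ[X_1,…,X_r] → ℝ[ℤ^k]`, `X_j ↦` the basis element of the group algebra indexed by the
`j`-th column of `A`, equals the ideal generated by the binomials
`X^u − X^v` with `u, v ∈ ℕ^r` and `A u = A v`. -/
theorem toric_ideal_eq_span_binomials
    {k r : ℕ} (A : Matrix (Fin k) (Fin r) ℤ)
    (φ : MvPolynomial (Fin r) ℝ →ₐ[ℝ] AddMonoidAlgebra ℝ (Fin k → ℤ))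
    (hφ : φ = MvPolynomial.aeval
      (fun j => AddMonoidAlgebra.single (fun i => A i j) (1 : ℝ))) :
    RingHom.ker φ.toRingHom =
      Ideal.span {f : MvPolynomial (Fin r) ℝ |
        ∃ u v : Fin r → ℕ,
          A.mulVec (fun j => (u j : ℤ)) = A.mulVec (fun j => (v j : ℤ)) ∧
          f = (∏ j, (X j : MvPolynomial (Fin r) ℝ) ^ u j) - ∏ j, (X j) ^ v j} := by
  set S : Set (MvPolynomial (Fin r) ℝ) := {f : MvPolynomial (Fin r) ℝ |
        ∃ u v : Fin r → ℕ,
          A.mulVec (fun j => (u j : ℤ)) = A.mulVec (fun j => (v j : ℤ)) ∧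
          f = (∏ j, (X j : MvPolynomial (Fin r) ℝ) ^ u j) - ∏ j, (X j) ^ v j} with hS
  set μ : (Fin r →₀ ℕ) → (Fin k → ℤ) := fun d => A.mulVec (fun j => (d j : ℤ)) with hμ
  -- ∏ X^d = monomial d 1
  have hprod : ∀ d : Fin r →₀ ℕ,
      (∏ j, (X j : MvPolynomial (Fin r) ℝ) ^ d j) = monomial d 1 := by
    intro d
    rw [monomial_eq, C_1, one_mul, Finsupp.prod_fintype]
    intro i; exact pow_zero _
  -- φ on monomials
  have hmono : ∀ (d : Fin r →₀ ℕ) (c : ℝ),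
      φ (monomial d c) = AddMonoidAlgebra.single (μ d) c := by
    intro d c
    rw [hφ, aeval_monomial, Finsupp.prod_fintype _ _ (fun i => pow_zero _)]
    have h1 : (∏ j, (AddMonoidAlgebra.single (fun i => A i j) (1:ℝ)) ^ d j)
        = AddMonoidAlgebra.single (∑ j, (d j : ℤ) • (fun i => A i j)) 1 := by
      rw [show (∏ j, (AddMonoidAlgebra.single (fun i => A i j) (1:ℝ)) ^ d j)
          = ∏ j, AddMonoidAlgebra.single ((d j : ℤ) • fun i => A i j) ((1:ℝ) ^ d j) by
        refine Finset.prod_congr rfl fun j _ => ?_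
        rw [AddMonoidAlgebra.single_pow]
        norm_num [natCast_zsmul]]
      rw [AddMonoidAlgebra.prod_single]
      simp
    rw [h1]
    have h2 : (∑ j, (d j : ℤ) • (fun i => A i j)) = μ d := by
      funext i
      simp [hμ, Matrix.mulVec, dotProduct, Finset.sum_apply, mul_comm]
    rw [h2, AddMonoidAlgebra.coe_algebraMap]
    simp only [Function.comp_apply, Algebra.algebraMap_self, RingHom.id_apply]
    rw [AddMonoidAlgebra.single_mul_single, zero_add, mul_one]
  -- elements of S
  have hSmem : ∀ d d' : Fin r →₀ ℕ, μ d = μ d' →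
      ((monomial d (1:ℝ)) - monomial d' 1) ∈ S := by
    intro d d' h
    exact ⟨⇑d, ⇑d', h, by rw [hprod, hprod]⟩
  apply le_antisymm
  · -- ker ⊆ span S
    intro f hf
    rw [RingHom.mem_ker] at hf
    -- strong induction on support card
    suffices H : ∀ n (f : MvPolynomial (Fin r) ℝ), f.support.card ≤ n → φ f = 0 →
        f ∈ Ideal.span S from H f.support.card f le_rfl hf
    intro n
    induction n with
    | zero =>
      intro f hcard _
      have : f = 0 := by
        rwa [Nat.le_zero, Finset.card_eq_zero, MvPolynomial.support_eq_empty] at hcard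
      simp [this]
    | succ n ih =>
      intro f hcard hker
      by_cases hf0 : f = 0
      · simp [hf0]
      obtain ⟨d, hd⟩ := Finset.nonempty_of_ne_empty
        (fun h => hf0 (MvPolynomial.support_eq_empty.mp h))
      -- sum over the fiber of μ d vanishes
      have hfiber : ∑ d' ∈ f.support,
          (if μ d' = μ d then coeff d' f else 0) = 0 := by
        have this : (φ f).coeff (μ d) = 0 := by rw [hker]; rfl
        rw [f.as_sum, map_sum] at this
        simp only [hmono] at this
        rw [show ((∑ v ∈ f.support, AddMonoidAlgebra.single (μ v) (coeff v f) :
            AddMonoidAlgebra ℝ (Fin k → ℤ))).coeff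
          = ∑ v ∈ f.support, Finsupp.single (μ v) (coeff v f) from AddMonoidAlgebra.coeff_sum _ _,
          Finsupp.finset_sum_apply] at this
        simpa [Finsupp.single_apply] using this
      -- find another support element in the same fiber
      have hd' : ∃ d' ∈ f.support, d' ≠ d ∧ μ d' = μ d ∧ coeff d' f ≠ 0 := by
        by_contra hcon
        push_neg at hcon
        have := Finset.sum_eq_single (s := f.support)
          (f := fun d' => if μ d' = μ d then coeff d' f else 0) d
          (fun b hb hbd => ?_) (fun h => absurd hd h)
        · rw [this] at hfiber
          simp only [if_pos rfl] at hfiber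
          exact (MvPolynomial.mem_support_iff.mp hd) hfiber
        · by_cases h1 : μ b = μ d
          · simp [h1, hcon b hb hbd h1]
          · simp [h1]
      obtain ⟨d', hd'sup, hne, hμeq, hc'⟩ := hd'
      set c := coeff d f with hc
      set b := (monomial d (1:ℝ)) - monomial d' 1 with hb
      have hbS : b ∈ S := hSmem d d' hμeq.symm
      have hφb : φ b = 0 := by
        rw [hb, map_sub, hmono, hmono, hμeq, sub_self]
      set g := f - c • b with hg
      have hφg : φ g = 0 := by
        rw [hg, map_sub, map_smul, hφb, smul_zero, sub_zero, hker]
      have hsub : g.support ⊆ f.support \ {d} := by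
        intro m hm
        rw [MvPolynomial.mem_support_iff] at hm
        rw [Finset.mem_sdiff, Finset.mem_singleton]
        by_cases hmd : m = d
        · exfalso
          apply hm
          rw [hg, hb, hmd]
          simp [MvPolynomial.coeff_sub, coeff_monomial, hne, hc]
        refine ⟨?_, hmd⟩
        by_cases hmd' : m = d'
        · exact hmd' ▸ hd'sup
        rw [MvPolynomial.mem_support_iff]
        intro h0
        apply hm
        have e1 : ¬ d = m := fun h => hmd h.symm
        have e2 : ¬ d' = m := fun h => hmd' h.symm
        rw [hg, hb]
        simp [MvPolynomial.coeff_sub, coeff_monomial, e1, e2, h0]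
      have hcards : g.support.card ≤ n := by
        calc g.support.card ≤ (f.support \ {d}).card := Finset.card_le_card hsub
        _ = f.support.card - 1 := by rw [Finset.card_sdiff_of_subset (by simpa using hd)]; simp
        _ ≤ n := by omega
      have hgspan := ih g hcards hφg
      have : f = g + c • b := by rw [hg]; ring
      rw [this]
      have hcb : c • b = C c * b := by rw [MvPolynomial.smul_eq_C_mul]
      rw [hcb]
      exact Ideal.add_mem _ hgspan (Ideal.mul_mem_left _ _ (Ideal.subset_span hbS))
  · -- span S ⊆ ker
    rw [Ideal.span_le]
    rintro f ⟨u, v, huv, rfl⟩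
    show _ ∈ RingHom.ker φ.toRingHom
    rw [RingHom.mem_ker]
    have h1 : (∏ j, (X j : MvPolynomial (Fin r) ℝ) ^ u j)
        = monomial (Finsupp.equivFunOnFinite.symm u) 1 := by
      have h := hprod (Finsupp.equivFunOnFinite.symm u)
      simpa [Finsupp.equivFunOnFinite_symm_coe] using h
    have h2 : (∏ j, (X j : MvPolynomial (Fin r) ℝ) ^ v j)
        = monomial (Finsupp.equivFunOnFinite.symm v) 1 := by
      have h := hprod (Finsupp.equivFunOnFinite.symm v)
      simpa [Finsupp.equivFunOnFinite_symm_coe] using h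
    rw [h1, h2, map_sub]
    show φ _ - φ _ = 0
    rw [hmono, hmono]
    have h3 : μ (Finsupp.equivFunOnFinite.symm u) = μ (Finsupp.equivFunOnFinite.symm v) := by
      simp only [hμ]
      have cu : ⇑(Finsupp.equivFunOnFinite.symm u) = u := rfl
      have cv : ⇑(Finsupp.equivFunOnFinite.symm v) = v := rfl
      rw [show (fun j => ((Finsupp.equivFunOnFinite.symm u) j : ℤ)) = fun j => ((u j : ℕ) : ℤ) from rfl,
        show (fun j => ((Finsupp.equivFunOnFinite.symm v) j : ℤ)) = fun j => ((v j : ℕ) : ℤ) from rfl]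
      exact huv
    rw [h3, sub_self]
end

section
/- (Fundamental theorem for Markov bases, Diaconis–Sturmfels.) Let A ∈ ℤ^{k×r} and let B ⊆ ker_ℤ A be a finite set of integer vectors. Then B is a Markov basis for A if and only if the set of binomials {X^{v⁺} − X^{v⁻} : v ∈ B}, where v⁺ and v⁻ denote the positive and negative parts of v (so v = v⁺ − v⁻ with v⁺, v⁻ ∈ ℕ^r of disjoint supports), is a generating set of the toric ideal I_A = ker φ_A. -/
open MvPolynomial

namespace MBaux
variable {k r : ℕ}

noncomputable def tf (u : Fin r → ℕ) : Fin r →₀ ℕ := Finsupp.equivFunOnFinite.symm u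

@[simp] lemma tf_apply (u : Fin r → ℕ) (j : Fin r) : tf u j = u j := rfl

@[simp] lemma tf_coe (d : Fin r →₀ ℕ) : tf (⇑d) = d := Finsupp.equivFunOnFinite.symm_apply_apply d

@[simp] lemma coe_tf (u : Fin r → ℕ) : ⇑(tf u) = u := rfl

def psi (A : Matrix (Fin k) (Fin r) ℤ) (u : Fin r → ℕ) : Fin k → ℤ :=
  A.mulVec fun j => (u j : ℤ)

lemma prod_single {G : Type*} [AddCommMonoid G] {s : Finset (Fin r)} (a : Fin r → G) (b : Fin r → ℝ) :
    (∏ j ∈ s, AddMonoidAlgebra.single (a j) (b j)) =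
      AddMonoidAlgebra.single (∑ j ∈ s, a j) (∏ j ∈ s, b j) := by
  classical
  induction s using Finset.induction with
  | empty => simp [AddMonoidAlgebra.one_def]
  | insert _ _ h ih =>
      rw [Finset.prod_insert h, ih, AddMonoidAlgebra.single_mul_single,
        Finset.sum_insert h, Finset.prod_insert h]

lemma phi_monomial (A : Matrix (Fin k) (Fin r) ℤ) (d : Fin r →₀ ℕ) (c : ℝ) :
    (MvPolynomial.aeval (fun j => AddMonoidAlgebra.single (fun i => A i j) (1 : ℝ)))
        (monomial d c) = AddMonoidAlgebra.single (psi A ⇑d) c := by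
  rw [aeval_monomial, Finsupp.prod_pow]
  have h0 : ∀ j : Fin r, (AddMonoidAlgebra.single (fun i => A i j) (1:ℝ)) ^ (d j)
      = AddMonoidAlgebra.single (fun i => (d j : ℤ) * A i j) (1:ℝ) := by
    intro j
    rw [AddMonoidAlgebra.single_pow, one_pow]
    congr 1
  simp_rw [h0, prod_single]
  have h1 : (∑ j : Fin r, fun i => (d j : ℤ) * A i j) = psi A ⇑d := by
    funext i
    simp [psi, Matrix.mulVec, dotProduct, Finset.sum_apply, mul_comm]
  rw [h1]
  simp only [Finset.prod_const_one]
  rw [show ((algebraMap ℝ (AddMonoidAlgebra ℝ (Fin k → ℤ))) c) = AddMonoidAlgebra.single 0 c from rfl,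
    AddMonoidAlgebra.single_mul_single]
  simp

noncomputable def binv (v : Fin r → ℤ) : MvPolynomial (Fin r) ℝ :=
  monomial (tf fun j => (v j).toNat) 1 - monomial (tf fun j => (-(v j)).toNat) 1

lemma prodX_eq_monomial (n : Fin r → ℕ) :
    (∏ j, (X j : MvPolynomial (Fin r) ℝ) ^ n j) = monomial (tf n) 1 := by
  rw [monomial_eq, C_1, one_mul, Finsupp.prod_pow]
  simp

lemma binv_eq (v : Fin r → ℤ) :
    (∏ j, (X j : MvPolynomial (Fin r) ℝ) ^ (v j).toNat) - ∏ j, (X j) ^ (-(v j)).toNat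
      = binv v := by
  rw [prodX_eq_monomial, prodX_eq_monomial, binv]

variable (B : Finset (Fin r → ℤ))

def step (w w' : Fin r → ℕ) : Prop :=
  ∃ v, (v ∈ B ∨ -v ∈ B) ∧ ∀ j, (w' j : ℤ) = w j + v j

lemma step_symm : Symmetric (step B) := by
  rintro w w' ⟨v, hv, h⟩
  refine ⟨-v, ?_, fun j => by have := h j; simp only [Pi.neg_apply]; linarith⟩
  rcases hv with h' | h'
  · exact Or.inr (by simpa using h')
  · exact Or.inl h'

lemma conn_path {u u' : Fin r → ℕ} (h : Relation.ReflTransGen (step B) u u') :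
    ∃ (L : ℕ) (v : ℕ → (Fin r → ℤ)),
      (∀ i < L, v i ∈ B ∨ -v i ∈ B) ∧
      (∀ j, (u' j : ℤ) = (u j : ℤ) + ∑ i ∈ Finset.range L, v i j) ∧
      (∀ l ≤ L, ∀ j, 0 ≤ (u j : ℤ) + ∑ i ∈ Finset.range l, v i j) := by
  induction h with
  | refl =>
      refine ⟨0, fun _ => 0, by simp, by simp, ?_⟩
      intro l hl j
      interval_cases l
      simp
  | @tail b c hab hbc ih =>
      obtain ⟨L, v, hv, hsum, hnn⟩ := ih
      obtain ⟨w, hw, hwsum⟩ := hbc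
      refine ⟨L + 1, fun i => if i < L then v i else w, ?_, ?_, ?_⟩
      · intro i hi
        by_cases h : i < L
        · simpa [h] using hv i h
        · simpa [h] using hw
      · intro j
        rw [Finset.sum_range_succ]
        have hagree : ∑ i ∈ Finset.range L, (if i < L then v i else w) j
            = ∑ i ∈ Finset.range L, v i j := by
          refine Finset.sum_congr rfl fun i hi => ?_
          simp [Finset.mem_range.mp hi]
        rw [hagree]
        have := hsum j
        have := hwsum j
        simp only [if_neg (lt_irrefl L)]
        linarith
      · intro l hl j
        by_cases h : l ≤ L
        · have hagree : ∑ i ∈ Finset.range l, (if i < L then v i else w) j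
              = ∑ i ∈ Finset.range l, v i j := by
            refine Finset.sum_congr rfl fun i hi => ?_
            have : i < L := lt_of_lt_of_le (Finset.mem_range.mp hi) h
            simp [this]
          rw [hagree]; exact hnn l h j
        · have hlL : l = L + 1 := by omega
          subst hlL
          rw [Finset.sum_range_succ]
          have hagree : ∑ i ∈ Finset.range L, (if i < L then v i else w) j
              = ∑ i ∈ Finset.range L, v i j := by
            refine Finset.sum_congr rfl fun i hi => ?_
            simp [Finset.mem_range.mp hi]
          rw [hagree]
          have := hsum j
          have := hwsum j
          simp only [if_neg (lt_irrefl L)]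
          have : (0:ℤ) ≤ (c j : ℤ) := Int.natCast_nonneg _
          linarith

lemma path_conn {u u' : Fin r → ℕ} (L : ℕ) (v : ℕ → (Fin r → ℤ))
    (hv : ∀ i < L, v i ∈ B ∨ -v i ∈ B)
    (hsum : ∀ j, (u' j : ℤ) = (u j : ℤ) + ∑ i ∈ Finset.range L, v i j)
    (hnn : ∀ l ≤ L, ∀ j, 0 ≤ (u j : ℤ) + ∑ i ∈ Finset.range l, v i j) :
    Relation.ReflTransGen (step B) u u' := by
  set p : ℕ → (Fin r → ℕ) := fun l j => ((u j : ℤ) + ∑ i ∈ Finset.range l, v i j).toNat with hp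
  have hcast : ∀ l ≤ L, ∀ j, ((p l j : ℤ)) = (u j : ℤ) + ∑ i ∈ Finset.range l, v i j := by
    intro l hl j
    exact Int.toNat_of_nonneg (hnn l hl j)
  have key : ∀ l ≤ L, Relation.ReflTransGen (step B) u (p l) := by
    intro l
    induction l with
    | zero =>
        intro _
        have : p 0 = u := by funext j; simp [hp]
        rw [this]
    | succ n ih =>
        intro hl
        have hn : n ≤ L := Nat.le_of_succ_le hl
        refine (ih hn).tail ⟨v n, hv n (Nat.lt_of_succ_le hl), fun j => ?_⟩
        rw [hcast _ hl j, hcast _ hn j, Finset.sum_range_succ]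
        ring
  have hpL : p L = u' := by
    funext j
    have := hcast L le_rfl j
    have h2 := hsum j
    omega
  rw [← hpL]
  exact key L le_rfl

lemma step_span {w w' : Fin r → ℕ} (h : step B w w') :
    monomial (tf w') 1 - monomial (tf w) 1 ∈
      Ideal.span {f : MvPolynomial (Fin r) ℝ | ∃ v ∈ B, f = binv v} := by
  obtain ⟨v, hv, hd⟩ := h
  set m : Fin r → ℕ := fun j => min (w j) (w' j) with hm
  have h1 : ∀ j, w' j = m j + (v j).toNat := by
    intro j; have := hd j
    have h2 : ((v j).toNat : ℤ) - ((-(v j)).toNat : ℤ) = v j := Int.toNat_sub_toNat_neg _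
    simp only [hm]; omega
  have h2 : ∀ j, w j = m j + (-(v j)).toNat := by
    intro j; have := hd j
    have h2 : ((v j).toNat : ℤ) - ((-(v j)).toNat : ℤ) = v j := Int.toNat_sub_toNat_neg _
    simp only [hm]; omega
  have e1 : tf w' = tf m + tf (fun j => (v j).toNat) := by
    ext j; simp [h1 j]
  have e2 : tf w = tf m + tf (fun j => (-(v j)).toNat) := by
    ext j; simp [h2 j]
  rcases hv with hv | hv
  · have : monomial (tf w') (1:ℝ) - monomial (tf w) 1 = monomial (tf m) 1 * binv v := by
      rw [binv, mul_sub, monomial_mul, monomial_mul, e1, e2, mul_one]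
    rw [this]
    exact Ideal.mul_mem_left _ _ (Ideal.subset_span ⟨v, hv, rfl⟩)
  · have : monomial (tf w') (1:ℝ) - monomial (tf w) 1 = -(monomial (tf m) 1 * binv (-v)) := by
      rw [binv, mul_sub, monomial_mul, monomial_mul, mul_one]
      simp only [Pi.neg_apply, neg_neg]
      rw [e1, e2]; ring
    rw [this]
    exact neg_mem (Ideal.mul_mem_left _ _ (Ideal.subset_span ⟨-v, hv, rfl⟩))

lemma conn_span {u u' : Fin r → ℕ} (h : Relation.ReflTransGen (step B) u u') :
    monomial (tf u') 1 - monomial (tf u) 1 ∈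
      Ideal.span {f : MvPolynomial (Fin r) ℝ | ∃ v ∈ B, f = binv v} := by
  induction h with
  | refl => simp
  | @tail b c hab hbc ih =>
      have : monomial (tf c) (1:ℝ) - monomial (tf u) 1
          = (monomial (tf c) 1 - monomial (tf b) 1) + (monomial (tf b) 1 - monomial (tf u) 1) := by
        ring
      rw [this]
      exact Ideal.add_mem _ (step_span B hbc) ih

lemma exists_partner (A : Matrix (Fin k) (Fin r) ℤ)
    (phiA : MvPolynomial (Fin r) ℝ →ₐ[ℝ] AddMonoidAlgebra ℝ (Fin k → ℤ))
    (hphi : ∀ (d : Fin r →₀ ℕ) (c : ℝ), phiA (monomial d c) = AddMonoidAlgebra.single (psi A ⇑d) c)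
    {p : MvPolynomial (Fin r) ℝ} (hker : phiA p = 0)
    {d : Fin r →₀ ℕ} (hd : d ∈ p.support) :
    ∃ d' ∈ p.support, d' ≠ d ∧ psi A ⇑d' = psi A ⇑d := by
  by_contra hcon
  push_neg at hcon
  have hrep : (∑ e ∈ p.support, AddMonoidAlgebra.single (psi A ⇑e) (coeff e p)) = 0 := by
    calc (∑ e ∈ p.support, AddMonoidAlgebra.single (psi A ⇑e) (coeff e p))
        = phiA (∑ e ∈ p.support, monomial e (coeff e p)) := by
          rw [map_sum]; exact Finset.sum_congr rfl fun e _ => (hphi e (coeff e p)).symm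
      _ = phiA p := by rw [p.support_sum_monomial_coeff]
      _ = 0 := hker
  have happ : (∑ e ∈ p.support, AddMonoidAlgebra.single (psi A ⇑e) (coeff e p)).coeff (psi A ⇑d) = 0 := by
    rw [hrep]; rfl
  rw [AddMonoidAlgebra.coeff_sum, Finsupp.finset_sum_apply] at happ
  have heval : ∀ e ∈ p.support, e ≠ d →
      (AddMonoidAlgebra.single (psi A ⇑e) (coeff e p)).coeff (psi A ⇑d) = 0 := by
    intro e he hne
    rw [AddMonoidAlgebra.coeff_single, Finsupp.single_apply, if_neg (hcon e he hne)]
  rw [Finset.sum_eq_single_of_mem d hd heval] at happ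
  rw [AddMonoidAlgebra.coeff_single, Finsupp.single_apply, if_pos rfl] at happ
  exact mem_support_iff.mp hd happ

lemma ker_le_span (A : Matrix (Fin k) (Fin r) ℤ)
    (phiA : MvPolynomial (Fin r) ℝ →ₐ[ℝ] AddMonoidAlgebra ℝ (Fin k → ℤ))
    (hphi : ∀ (d : Fin r →₀ ℕ) (c : ℝ), phiA (monomial d c) = AddMonoidAlgebra.single (psi A ⇑d) c)
    (I : Ideal (MvPolynomial (Fin r) ℝ))
    (hbin : ∀ d d' : Fin r →₀ ℕ, psi A ⇑d' = psi A ⇑d →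
      (monomial d 1 - monomial d' 1 : MvPolynomial (Fin r) ℝ) ∈ I)
    (p : MvPolynomial (Fin r) ℝ) (hker : phiA p = 0) : p ∈ I := by
  generalize hn : p.support.card = n
  induction n using Nat.strong_induction_on generalizing p with
  | _ n ih =>
    by_cases hp0 : p = 0
    · simp [hp0]
    · obtain ⟨d, hd⟩ := (support_nonempty.mpr hp0 : p.support.Nonempty)
      obtain ⟨d', hd', hne, hfib⟩ := exists_partner A phiA hphi hker hd
      set c := coeff d p with hc
      set g : MvPolynomial (Fin r) ℝ := monomial d 1 - monomial d' 1 with hg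
      set q := p - c • g with hq
      have hcg : phiA g = 0 := by
        rw [hg, map_sub]
        have e1 := hphi d 1
        have e2 := hphi d' 1
        rw [e1, e2, hfib, sub_self]
      have hqker : phiA q = 0 := by
        rw [hq, map_sub, map_smul, hker, hcg, smul_zero, sub_zero]
      have hsupp : q.support ⊆ p.support.erase d := by
        intro e he
        rw [Finset.mem_erase]
        have hcoeffq : ∀ e', coeff e' q = coeff e' p - c * (coeff e' (monomial d (1:ℝ)) - coeff e' (monomial d' 1)) := by
          intro e'
          simp [hq, hg, coeff_sub, coeff_smul, mul_sub, smul_eq_mul]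
        constructor
        · rintro rfl
          have : coeff e q = 0 := by
            rw [hcoeffq]
            rw [coeff_monomial, if_pos rfl, coeff_monomial, if_neg hne]
            ring
          exact mem_support_iff.mp he this
        · by_cases hed' : e = d'
          · subst hed'; exact hd'
          · have hed : e ≠ d := by
              rintro rfl
              have : coeff e q = 0 := by
                rw [hcoeffq, coeff_monomial, if_pos rfl, coeff_monomial, if_neg hne]; ring
              exact mem_support_iff.mp he this
            have : coeff e q = coeff e p := by
              rw [hcoeffq, coeff_monomial, if_neg (Ne.symm hed), coeff_monomial,
                if_neg (fun h => hed' h.symm)]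
              ring
            rw [mem_support_iff, this] at he
            exact mem_support_iff.mpr he
      have hcard : q.support.card < n := by
        calc q.support.card ≤ (p.support.erase d).card := Finset.card_le_card hsupp
          _ < p.support.card := Finset.card_erase_lt_of_mem hd
          _ = n := hn
      have hqI : q ∈ I := ih _ hcard q hqker rfl
      have hgI : g ∈ I := hbin d d' hfib
      have : p = q + c • g := by rw [hq]; ring
      rw [this]
      exact I.add_mem hqI (by rw [← C_mul' (a := c)]; exact I.mul_mem_left _ hgI)

def mbSetoid : Setoid (Fin r → ℕ) :=
  ⟨Relation.ReflTransGen (step B),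
    ⟨fun _ => .refl, fun h => haveI : Std.Symm (step B) := ⟨fun _ _ h => step_symm B h⟩; Std.Symm.symm (r := Relation.ReflTransGen (step B)) _ _ h,
      fun h1 h2 => .trans h1 h2⟩⟩

noncomputable def piQ (p : MvPolynomial (Fin r) ℝ) : Quotient (mbSetoid B) →₀ ℝ :=
  Finsupp.mapDomain (fun d : Fin r →₀ ℕ => Quotient.mk (mbSetoid B) ⇑d) (AddMonoidAlgebra.coeff p)

lemma piQ_add (p q : MvPolynomial (Fin r) ℝ) : piQ B (p + q) = piQ B p + piQ B q := by
  rw [piQ, piQ, piQ, AddMonoidAlgebra.coeff_add]; exact Finsupp.mapDomain_add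

lemma piQ_smul (c : ℝ) (p : MvPolynomial (Fin r) ℝ) : piQ B (c • p) = c • piQ B p :=
  by rw [piQ, piQ, AddMonoidAlgebra.coeff_smul]; exact Finsupp.mapDomain_smul c _

lemma piQ_zero : piQ B (0 : MvPolynomial (Fin r) ℝ) = 0 := by
  rw [piQ, AddMonoidAlgebra.coeff_zero]; exact Finsupp.mapDomain_zero

lemma piQ_monomial (d : Fin r →₀ ℕ) (c : ℝ) :
    piQ B (monomial d c) = Finsupp.single (Quotient.mk (mbSetoid B) ⇑d) c := by
  rw [piQ, ← single_eq_monomial]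
  exact Finsupp.mapDomain_single

lemma piQ_sub (p q : MvPolynomial (Fin r) ℝ) : piQ B (p - q) = piQ B p - piQ B q := by
  have h := piQ_add B q (p - q)
  rw [add_sub_cancel] at h
  rw [h]; abel

lemma piQ_gen (v : Fin r → ℤ) (hv : v ∈ B) (m : Fin r →₀ ℕ) (c : ℝ) :
    piQ B (monomial m c * binv v) = 0 := by
  rw [binv, mul_sub, monomial_mul, monomial_mul, mul_one, piQ_sub, piQ_monomial, piQ_monomial]
  have hq : Quotient.mk (mbSetoid B) ⇑(m + tf fun j => (v j).toNat)
      = Quotient.mk (mbSetoid B) ⇑(m + tf fun j => (-(v j)).toNat) := by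
    apply Quotient.sound
    apply Relation.ReflTransGen.single
    refine ⟨-v, Or.inr (by simpa using hv), fun j => ?_⟩
    have h2 : ((v j).toNat : ℤ) - ((-(v j)).toNat : ℤ) = v j := Int.toNat_sub_toNat_neg _
    simp only [Finsupp.coe_add, Pi.add_apply, tf_apply, Pi.neg_apply]
    push_cast
    omega
  rw [hq, sub_self]

noncomputable def Mmod : Submodule ℝ (MvPolynomial (Fin r) ℝ) :=
  Submodule.span ℝ {f | ∃ v ∈ B, ∃ m : Fin r →₀ ℕ, ∃ c : ℝ, f = monomial m c * binv v}

lemma Mmod_mul_mem (p : MvPolynomial (Fin r) ℝ) {x : MvPolynomial (Fin r) ℝ}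
    (hx : x ∈ Mmod B) : p * x ∈ Mmod B := by
  induction p using MvPolynomial.induction_on' with
  | monomial m c =>
      refine Submodule.span_induction ?_ ?_ ?_ ?_ hx
      · rintro f ⟨v, hv, m', c', rfl⟩
        rw [← mul_assoc, monomial_mul]
        exact Submodule.subset_span ⟨v, hv, m + m', c * c', rfl⟩
      · rw [mul_zero]; exact (Mmod B).zero_mem
      · intro a b _ _ ha hb
        rw [mul_add]; exact (Mmod B).add_mem ha hb
      · intro a y _ hy
        rw [mul_smul_comm]; exact (Mmod B).smul_mem a hy
  | add p q hp hq =>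
      rw [add_mul]; exact (Mmod B).add_mem hp hq

lemma span_le_Mmod {x : MvPolynomial (Fin r) ℝ}
    (hx : x ∈ Ideal.span {f : MvPolynomial (Fin r) ℝ | ∃ v ∈ B, f = binv v}) :
    x ∈ Mmod B := by
  refine Submodule.span_induction ?_ ?_ ?_ ?_ hx
  · rintro f ⟨v, hv, rfl⟩
    have : binv v = monomial 0 1 * binv v := by rw [monomial_zero', C_1, one_mul]
    rw [this]
    exact Submodule.subset_span ⟨v, hv, 0, 1, rfl⟩
  · exact (Mmod B).zero_mem
  · intro a b _ _ ha hb; exact (Mmod B).add_mem ha hb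
  · intro a y _ hy
    rw [smul_eq_mul]; exact Mmod_mul_mem B a hy

lemma piQ_Mmod {x : MvPolynomial (Fin r) ℝ} (hx : x ∈ Mmod B) : piQ B x = 0 := by
  refine Submodule.span_induction ?_ ?_ ?_ ?_ hx
  · rintro f ⟨v, hv, m, c, rfl⟩
    exact piQ_gen B v hv m c
  · exact piQ_zero B
  · intro a b _ _ ha hb
    rw [piQ_add, ha, hb, add_zero]
  · intro a y _ hy
    rw [piQ_smul, hy, smul_zero]

lemma span_conn {u u' : Fin r → ℕ}
    (h : (monomial (tf u) 1 - monomial (tf u') 1 : MvPolynomial (Fin r) ℝ) ∈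
      Ideal.span {f : MvPolynomial (Fin r) ℝ | ∃ v ∈ B, f = binv v}) :
    Relation.ReflTransGen (step B) u u' := by
  have h0 := piQ_Mmod B (span_le_Mmod B h)
  rw [piQ_sub, piQ_monomial, piQ_monomial, sub_eq_zero] at h0
  have := (Finsupp.single_eq_single_iff _ _ _ _).mp h0
  rcases this with ⟨hq, -⟩ | ⟨h1, -⟩
  · exact Quotient.exact (by simpa using hq)
  · exact absurd h1 one_ne_zero

end MBaux

/-- `B` is a Markov basis for the integer matrix `A`: for every `u ∈ ℕ^r` and every `u'` in the
fibre `F(u) = {w ∈ ℕ^r : A w = A u}` there is a sequence of moves `v 0, …, v (L-1)` taken from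
`±B` connecting `u` to `u'` with all partial sums coordinatewise nonnegative. -/
def IsMarkovBasis {k r : ℕ} (A : Matrix (Fin k) (Fin r) ℤ)
    (B : Finset (Fin r → ℤ)) : Prop :=
  (∀ v ∈ B, A.mulVec v = 0) ∧
  ∀ u u' : Fin r → ℕ,
    A.mulVec (fun j => (u' j : ℤ)) = A.mulVec (fun j => (u j : ℤ)) →
    ∃ (L : ℕ) (v : ℕ → (Fin r → ℤ)),
      (∀ i < L, v i ∈ B ∨ -v i ∈ B) ∧
      (∀ j, (u' j : ℤ) = (u j : ℤ) + ∑ i ∈ Finset.range L, v i j) ∧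
      (∀ l ≤ L, ∀ j, 0 ≤ (u j : ℤ) + ∑ i ∈ Finset.range l, v i j)

/-- **Fundamental theorem for Markov bases (Diaconis–Sturmfels).**
A finite set `B ⊆ ker_ℤ A` is a Markov basis for `A` if and only if the binomials
`X^{v⁺} − X^{v⁻}`, `v ∈ B`, generate the toric ideal `I_A = ker φ_A`. -/
theorem isMarkovBasis_iff_binomials_generate_toric_ideal
    {k r : ℕ} (A : Matrix (Fin k) (Fin r) ℤ)
    (B : Finset (Fin r → ℤ)) (hB : ∀ v ∈ B, A.mulVec v = 0)
    (φ : MvPolynomial (Fin r) ℝ →ₐ[ℝ] AddMonoidAlgebra ℝ (Fin k → ℤ))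
    (hφ : φ = MvPolynomial.aeval
      (fun j => AddMonoidAlgebra.single (fun i => A i j) (1 : ℝ))) :
    IsMarkovBasis A B ↔
      Ideal.span {f : MvPolynomial (Fin r) ℝ |
          ∃ v ∈ B, f = (∏ j, (X j : MvPolynomial (Fin r) ℝ) ^ (v j).toNat)
            - ∏ j, (X j) ^ (-(v j)).toNat} = RingHom.ker φ.toRingHom := by
  subst hφ
  have hphi : ∀ (d : Fin r →₀ ℕ) (c : ℝ),
      (MvPolynomial.aeval (fun j => AddMonoidAlgebra.single (fun i => A i j) (1 : ℝ)))
        (monomial d c) = AddMonoidAlgebra.single (MBaux.psi A ⇑d) c := MBaux.phi_monomial A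
  have hSet : {f : MvPolynomial (Fin r) ℝ |
          ∃ v ∈ B, f = (∏ j, (X j : MvPolynomial (Fin r) ℝ) ^ (v j).toNat)
            - ∏ j, (X j) ^ (-(v j)).toNat}
      = {f : MvPolynomial (Fin r) ℝ | ∃ v ∈ B, f = MBaux.binv v} := by
    ext f
    simp only [Set.mem_setOf_eq, MBaux.binv_eq]
  rw [hSet]
  have hpsi_pm : ∀ v ∈ B, MBaux.psi A (fun j => (v j).toNat) = MBaux.psi A (fun j => (-(v j)).toNat) := by
    intro v hv
    have h1 : A.mulVec ((fun j => ((v j).toNat : ℤ)) - (fun j => ((-(v j)).toNat : ℤ))) = 0 := by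
      have : ((fun j => ((v j).toNat : ℤ)) - (fun j => ((-(v j)).toNat : ℤ))) = v := by
        funext j
        simp only [Pi.sub_apply]
        exact Int.toNat_sub_toNat_neg _
      rw [this]; exact hB v hv
    rw [Matrix.mulVec_sub] at h1
    exact sub_eq_zero.mp h1
  constructor
  · rintro ⟨-, hmk⟩
    apply le_antisymm
    · rw [Ideal.span_le]
      rintro f ⟨v, hv, rfl⟩
      simp only [SetLike.mem_coe, RingHom.mem_ker]
      show (MvPolynomial.aeval _) (MBaux.binv v) = 0
      rw [MBaux.binv, map_sub, hphi, hphi]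
      simp only [MBaux.coe_tf]
      rw [hpsi_pm v hv, sub_self]
    · intro p hp
      refine MBaux.ker_le_span A _ hphi _ ?_ p (RingHom.mem_ker.mp hp)
      intro d d' hfib
      obtain ⟨L, w, hw1, hw2, hw3⟩ := hmk ⇑d ⇑d' hfib
      have hconn := MBaux.path_conn B L w hw1 hw2 hw3
      have := MBaux.conn_span B hconn
      simp only [MBaux.tf_coe] at this
      have : (monomial d 1 - monomial d' 1 : MvPolynomial (Fin r) ℝ)
          = -(monomial d' 1 - monomial d 1) := by ring
      rw [this]
      exact neg_mem (by simpa using MBaux.conn_span B hconn)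
  · intro hspan
    refine ⟨hB, ?_⟩
    intro u u' hA
    have hker : (MvPolynomial.aeval (fun j => AddMonoidAlgebra.single (fun i => A i j) (1 : ℝ)))
        ((monomial (MBaux.tf u) 1 - monomial (MBaux.tf u') 1 : MvPolynomial (Fin r) ℝ)) = 0 := by
      rw [map_sub, hphi, hphi]
      simp only [MBaux.coe_tf]
      have : MBaux.psi A u' = MBaux.psi A u := hA
      rw [this, sub_self]
    have hmem : (monomial (MBaux.tf u) 1 - monomial (MBaux.tf u') 1 : MvPolynomial (Fin r) ℝ)
        ∈ Ideal.span {f : MvPolynomial (Fin r) ℝ | ∃ v ∈ B, f = MBaux.binv v} := by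
      rw [hspan]
      exact RingHom.mem_ker.mpr hker
    exact MBaux.conn_path B (MBaux.span_conn B hmem)
end

section
/- For every integer matrix A ∈ ℤ^{k×r} there exists a finite Markov basis for A. -/
/-- Encode an integer vector as the pair of its positive and negative parts. -/
private def mbEnc {r : ℕ} (v : Fin r → ℤ) : Fin r × Bool → ℕ :=
  fun p => if p.2 then (v p.1).toNat else (-v p.1).toNat

/-- Decode. -/
private def mbDec {r : ℕ} (p : Fin r × Bool → ℕ) : Fin r → ℤ :=
  fun j => (p (j, true) : ℤ) - (p (j, false) : ℤ)

private lemma mbEnc_apply_true {r : ℕ} (v : Fin r → ℤ) (j : Fin r) :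
    mbEnc v (j, true) = (v j).toNat := by simp [mbEnc]

private lemma mbEnc_apply_false {r : ℕ} (v : Fin r → ℤ) (j : Fin r) :
    mbEnc v (j, false) = (-v j).toNat := by simp [mbEnc]

private lemma mbDec_enc {r : ℕ} (v : Fin r → ℤ) : mbDec (mbEnc v) = v := by
  funext j
  simp only [mbDec, mbEnc_apply_true, mbEnc_apply_false]
  omega

/-- **Existence of Markov bases.** Every integer matrix `A ∈ ℤ^{k×r}` admits a finite
Markov basis. -/
theorem exists_finite_markov_basis {k r : ℕ} (A : Matrix (Fin k) (Fin r) ℤ) :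
    ∃ B : Finset (Fin r → ℤ), IsMarkovBasis A B := by
  classical
  -- the set of encodings of nonzero kernel elements
  set S : Set (Fin r × Bool → ℕ) :=
    mbEnc '' {v | A.mulVec v = 0 ∧ v ≠ 0} with hSdef
  -- its set of minimal elements
  set M : Set (Fin r × Bool → ℕ) := {p ∈ S | ∀ q ∈ S, q ≤ p → q = p} with hMdef
  have hMfin : M.Finite := by
    have hanti : IsAntichain (· ≤ ·) M := by
      intro a ha b hb hne hle
      exact hne (hb.2 a ha.1 hle)
    exact hanti.finite_of_partiallyWellOrderedOn (Set.isPWO_of_wellQuasiOrderedLE M)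
  set B : Finset (Fin r → ℤ) := hMfin.toFinset.image mbDec with hBdef
  have hBmem : ∀ w : Fin r → ℤ, mbEnc w ∈ M → w ∈ B := by
    intro w hw
    exact Finset.mem_image.2 ⟨mbEnc w, hMfin.mem_toFinset.2 hw, mbDec_enc w⟩
  have hBker : ∀ v ∈ B, A.mulVec v = 0 := by
    intro v hv
    obtain ⟨p, hp, rfl⟩ := Finset.mem_image.1 hv
    obtain ⟨w, hw, rfl⟩ := (hMfin.mem_toFinset.1 hp).1
    rw [mbDec_enc]
    exact hw.1
  -- every nonzero kernel element dominates a minimal one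
  have hmin : ∀ n (v : Fin r → ℤ), (∑ p, mbEnc v p) = n → A.mulVec v = 0 → v ≠ 0 →
      ∃ w, A.mulVec w = 0 ∧ w ≠ 0 ∧ mbEnc w ∈ M ∧ mbEnc w ≤ mbEnc v := by
    intro n
    induction n using Nat.strong_induction_on with
    | _ n ih =>
      intro v hsum hv0 hvne
      by_cases hvM : mbEnc v ∈ M
      · exact ⟨v, hv0, hvne, hvM, le_refl _⟩
      · have hvS : mbEnc v ∈ S := ⟨v, ⟨hv0, hvne⟩, rfl⟩
        have hex : ∃ q ∈ S, q ≤ mbEnc v ∧ q ≠ mbEnc v := by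
          by_contra h
          push_neg at h
          exact hvM ⟨hvS, fun q hq hle => h q hq hle⟩
        obtain ⟨q, hqS, hqle, hqne⟩ := hex
        obtain ⟨v', hv'K, rfl⟩ := hqS
        have hlt : (∑ p, mbEnc v' p) < n := by
          rw [← hsum]
          refine Finset.sum_lt_sum (fun p _ => hqle p) ?_
          by_contra h
          push_neg at h
          exact hqne (funext fun p => le_antisymm (hqle p) (h p (Finset.mem_univ p)))
        obtain ⟨w, h1, h2, h3, h4⟩ := ih _ hlt v' rfl hv'K.1 hv'K.2
        exact ⟨w, h1, h2, h3, le_trans h4 hqle⟩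
  refine ⟨B, hBker, ?_⟩
  -- main connectivity statement, by strong induction on the ℓ¹ distance
  have key : ∀ n (u u' : Fin r → ℕ), (∑ j, ((u' j : ℤ) - u j).natAbs) = n →
      A.mulVec (fun j => (u' j : ℤ)) = A.mulVec (fun j => (u j : ℤ)) →
      ∃ (L : ℕ) (v : ℕ → (Fin r → ℤ)),
        (∀ i < L, v i ∈ B ∨ -v i ∈ B) ∧
        (∀ j, (u' j : ℤ) = (u j : ℤ) + ∑ i ∈ Finset.range L, v i j) ∧
        (∀ l ≤ L, ∀ j, 0 ≤ (u j : ℤ) + ∑ i ∈ Finset.range l, v i j) := by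
    intro n
    induction n using Nat.strong_induction_on with
    | _ n ih =>
      intro u u' hsum heq
      by_cases hne : ∀ j, u j = u' j
      · refine ⟨0, fun _ => 0, ?_, ?_, ?_⟩
        · intro i hi; omega
        · intro j; simp [hne j]
        · intro l hl j
          interval_cases l
          simp
      · -- the difference vector is a nonzero kernel element
        set d : Fin r → ℤ := fun j => (u' j : ℤ) - u j with hd
        have hd0 : A.mulVec d = 0 := by
          have hde : d = (fun j => (u' j : ℤ)) - (fun j => (u j : ℤ)) := rfl
          rw [hde, Matrix.mulVec_sub, heq, sub_self]
        have hdne : d ≠ 0 := by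
          intro h
          apply hne
          intro j
          have := congrFun h j
          simp only [hd, Pi.zero_apply] at this
          omega
        obtain ⟨w, hw0, hwne, hwM, hwle⟩ := hmin _ d rfl hd0 hdne
        have hco : ∀ j, (w j).toNat ≤ (d j).toNat ∧ (-w j).toNat ≤ (-d j).toNat := by
          intro j
          constructor
          · have := hwle (j, true)
            rwa [mbEnc_apply_true, mbEnc_apply_true] at this
          · have := hwle (j, false)
            rwa [mbEnc_apply_false, mbEnc_apply_false] at this
        have hdj : ∀ j, d j = (u' j : ℤ) - u j := fun j => rfl
        have hpos : ∀ j, 0 ≤ (u j : ℤ) + w j := by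
          intro j
          have h1 := (hco j).1
          have h2 := (hco j).2
          rw [hdj j] at h1 h2
          omega
        set u₂ : Fin r → ℕ := fun j => ((u j : ℤ) + w j).toNat with hu₂
        have hu₂c : ∀ j, (u₂ j : ℤ) = (u j : ℤ) + w j := by
          intro j
          simp only [hu₂]
          exact Int.toNat_of_nonneg (hpos j)
        have heq₂ : A.mulVec (fun j => (u' j : ℤ)) = A.mulVec (fun j => (u₂ j : ℤ)) := by
          have h1 : (fun j => (u₂ j : ℤ)) = (fun j => (u j : ℤ)) + w :=
            funext fun j => hu₂c j
          rw [h1, Matrix.mulVec_add, hw0, add_zero, heq]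
        have hstep : ∀ j, ((u' j : ℤ) - u₂ j).natAbs + (w j).natAbs
            = ((u' j : ℤ) - u j).natAbs := by
          intro j
          have h1 := (hco j).1
          have h2 := (hco j).2
          have h3 := hu₂c j
          rw [hdj j] at h1 h2
          omega
        have hlt : (∑ j, ((u' j : ℤ) - u₂ j).natAbs) < n := by
          have hsum2 : (∑ j, ((u' j : ℤ) - u₂ j).natAbs) + (∑ j, (w j).natAbs) = n := by
            rw [← hsum, ← Finset.sum_add_distrib]
            exact Finset.sum_congr rfl fun j _ => hstep j
          have hwpos : (∑ j, (w j).natAbs) ≠ 0 := by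
            intro h
            apply hwne
            funext j
            have := (Finset.sum_eq_zero_iff.1 h) j (Finset.mem_univ j)
            simp only [Pi.zero_apply]
            omega
          omega
        obtain ⟨L, vs, hvs1, hvs2, hvs3⟩ := ih _ hlt u₂ u' rfl heq₂
        refine ⟨L + 1, fun i => Nat.casesOn i w (fun m => vs m), ?_, ?_, ?_⟩
        · intro i hi
          cases i with
          | zero => exact Or.inl (hBmem w hwM)
          | succ m => exact hvs1 m (by omega)
        · intro j
          have hshift : (∑ i ∈ Finset.range (L + 1),
              (Nat.casesOn i w (fun m => vs m) : Fin r → ℤ) j)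
              = (∑ i ∈ Finset.range L, vs i j) + w j := by
            rw [Finset.sum_range_succ']
            rfl
          rw [hshift]
          have := hvs2 j
          have := hu₂c j
          omega
        · intro l hl j
          cases l with
          | zero => simp
          | succ m =>
            have hshift : (∑ i ∈ Finset.range (m + 1),
                (Nat.casesOn i w (fun m => vs m) : Fin r → ℤ) j)
                = (∑ i ∈ Finset.range m, vs i j) + w j := by
              rw [Finset.sum_range_succ']
              rfl
            rw [hshift]
            have h1 := hvs3 m (by omega) j
            have h2 := hu₂c j
            omega
  intro u u' heq
  exact key _ u u' rfl heq
end

section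
/- (Fisher's combination under the null.) Let N ≥ 1 and let p_1, …, p_N be independent random variables, each uniformly distributed on (0,1). Then the statistic T = −2 Σ_{i=1}^{N} log p_i has the chi-squared distribution with 2N degrees of freedom; equivalently, the pushforward of the N-fold product of the uniform measure on (0,1) under the map x ↦ −2 Σ_{i=1}^N log x_i equals the Gamma distribution with shape parameter N and rate parameter 1/2. -/
open MeasureTheory ProbabilityTheory

section FisherAux
open scoped ENNReal NNReal
open Real Set


-- step 1: convolution of densities
lemma my_conv_withDensity {f g : ℝ → ℝ≥0∞} (hf : Measurable f) (hg : Measurable g) :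
    Measure.conv (volume.withDensity f) (volume.withDensity g) =
      volume.withDensity (fun t => ∫⁻ x, f x * g (t - x)) := by
  ext s hs
  rw [Measure.conv, Measure.map_apply measurable_add hs,
    Measure.prod_apply (measurable_add hs)]
  have h1 : ∀ x : ℝ, (volume.withDensity g)
      (Prod.mk x ⁻¹' ((fun p : ℝ × ℝ => p.1 + p.2) ⁻¹' s)) = ∫⁻ t in s, g (t - x) := by
    intro x
    have hset : (Prod.mk x ⁻¹' ((fun p : ℝ × ℝ => p.1 + p.2) ⁻¹' s))
        = (fun y : ℝ => x + y) ⁻¹' s := rfl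
    rw [hset, withDensity_apply _ ((measurable_const_add x) hs),
      ← lintegral_indicator ((measurable_const_add x) hs) g]
    have : ∀ y : ℝ, ((fun y : ℝ => x + y) ⁻¹' s).indicator g y
        = s.indicator (fun u => g (u - x)) (x + y) := by
      intro y
      simp only [Set.indicator, Set.mem_preimage, add_sub_cancel_left]
      rfl
    simp_rw [this]
    rw [lintegral_add_left_eq_self (s.indicator fun u => g (u - x)) x,
      lintegral_indicator hs _]
  simp_rw [h1]
  have hmeas : Measurable fun x : ℝ => ∫⁻ t in s, g (t - x) := by
    exact Measurable.lintegral_prod_right'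
      (f := fun p : ℝ × ℝ => g (p.2 - p.1)) (hg.comp (measurable_snd.sub measurable_fst))
  rw [lintegral_withDensity_eq_lintegral_mul _ hf hmeas]
  simp only [Pi.mul_apply]
  have h2 : ∀ x : ℝ, f x * ∫⁻ t in s, g (t - x) = ∫⁻ t in s, f x * g (t - x) := by
    intro x
    exact (lintegral_const_mul (f x) (by fun_prop)).symm
  simp_rw [h2]
  rw [lintegral_lintegral_swap, withDensity_apply _ hs]
  exact ((hf.comp measurable_fst).mul
    (hg.comp (measurable_snd.sub measurable_fst))).aemeasurable


lemma my_measurable_gammaPDF (a r : ℝ) : Measurable (gammaPDF a r) :=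
  (measurable_gammaPDFReal a r).ennreal_ofReal

lemma my_gammaPDF_conv (n : ℕ) (hn : 1 ≤ n) :
    (fun t : ℝ => ∫⁻ x, gammaPDF n (1/2) x * gammaPDF 1 (1/2) (t - x))
      =ᵐ[volume] gammaPDF ((n + 1 : ℕ) : ℝ) (1/2) := by
  have hΓ : 0 < Real.Gamma n := Real.Gamma_pos_of_pos (by exact_mod_cast hn)
  have hn0 : ((n : ℝ)) ≠ 0 := by positivity
  filter_upwards [compl_mem_ae_iff.mpr (measure_singleton (0:ℝ))] with t ht
  replace ht : t ≠ 0 := ht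
  rcases lt_or_gt_of_ne ht with htneg | htpos
  · -- t < 0 : both sides vanish
    have h0 : ∀ x : ℝ, gammaPDF (n:ℝ) (1/2) x * gammaPDF 1 (1/2) (t - x) = 0 := by
      intro x
      rcases lt_or_ge x 0 with hx | hx
      · rw [gammaPDF_of_neg hx, zero_mul]
      · rw [gammaPDF_of_neg (show t - x < 0 by linarith), mul_zero]
    simp only [h0, lintegral_zero]
    exact (gammaPDF_of_neg htneg).symm
  · -- t > 0
    set Kc : ℝ := (1/2 : ℝ)^(n+1) / Real.Gamma n * Real.exp (-(1/2 * t)) with hKc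
    have hKc0 : 0 ≤ Kc := by positivity
    have hcast : (((n - 1 : ℕ) : ℝ)) = (n : ℝ) - 1 := by
      push_cast [hn]; ring
    have hreal : ∀ x : ℝ, gammaPDFReal n (1/2) x * gammaPDFReal 1 (1/2) (t - x)
        = (Icc 0 t).indicator (fun x => Kc * x ^ (n - 1)) x := by
      intro x
      rcases lt_or_ge x 0 with hx | hx
      · rw [Set.indicator_of_notMem (by simp [Set.mem_Icc]; intro h; linarith)]
        unfold gammaPDFReal
        rw [if_neg (not_le.mpr hx), zero_mul]
      rcases lt_or_ge t x with hxt | hxt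
      · rw [Set.indicator_of_notMem (by simp [Set.mem_Icc]; intro h; linarith)]
        unfold gammaPDFReal
        rw [if_neg (not_le.mpr (by linarith : t - x < 0)), mul_zero]
      · rw [Set.indicator_of_mem (Set.mem_Icc.mpr ⟨hx, hxt⟩)]
        unfold gammaPDFReal
        rw [if_pos hx, if_pos (by linarith : (0:ℝ) ≤ t - x)]
        rw [Real.Gamma_one, Real.rpow_one, sub_self, Real.rpow_zero]
        rw [show (n : ℝ) - 1 = ((n - 1 : ℕ) : ℝ) from hcast.symm, Real.rpow_natCast,
          Real.rpow_natCast]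
        have he : Real.exp (-(1/2 * x)) * Real.exp (-(1/2 * (t - x)))
            = Real.exp (-(1/2 * t)) := by
          rw [← Real.exp_add]; ring_nf
        calc (1/2:ℝ) ^ n / Real.Gamma n * x ^ (n-1) * Real.exp (-(1/2 * x)) *
              ((1/2) / 1 * 1 * Real.exp (-(1/2 * (t - x))))
            = (1/2:ℝ)^(n+1) / Real.Gamma n *
              (Real.exp (-(1/2 * x)) * Real.exp (-(1/2 * (t-x)))) * x ^ (n-1) := by ring
          _ = Kc * x ^ (n-1) := by rw [he]; try ring
    have hint : ∫⁻ x, gammaPDF n (1/2) x * gammaPDF 1 (1/2) (t - x)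
        = ∫⁻ x in Icc 0 t, ENNReal.ofReal (Kc * x ^ (n-1)) := by
      have : ∀ x : ℝ, gammaPDF (n:ℝ) (1/2) x * gammaPDF 1 (1/2) (t - x)
          = (Icc 0 t).indicator (fun x => ENNReal.ofReal (Kc * x ^ (n-1))) x := by
        intro x
        rw [gammaPDF, gammaPDF, ← ENNReal.ofReal_mul (gammaPDFReal_nonneg
          (by exact_mod_cast Nat.pos_of_ne_zero (by omega) : (0:ℝ) < (n:ℝ)) (by norm_num) x), hreal x]
        by_cases hmem : x ∈ Icc (0:ℝ) t
        · rw [Set.indicator_of_mem hmem, Set.indicator_of_mem hmem]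
        · rw [Set.indicator_of_notMem hmem, Set.indicator_of_notMem hmem,
            ENNReal.ofReal_zero]
      simp_rw [this]
      rw [lintegral_indicator measurableSet_Icc]
    rw [hint]
    have hInteg : IntegrableOn (fun x : ℝ => Kc * x ^ (n-1)) (Icc 0 t) :=
      (continuous_const.mul (continuous_pow _)).integrableOn_Icc
    have hnn : 0 ≤ᵐ[volume.restrict (Icc 0 t)] fun x : ℝ => Kc * x ^ (n-1) := by
      refine (ae_restrict_iff' measurableSet_Icc).mpr (ae_of_all _ fun x hx => ?_)
      have : (0:ℝ) ≤ x := hx.1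
      positivity
    rw [← MeasureTheory.ofReal_integral_eq_lintegral_ofReal hInteg hnn]
    have hIval : ∫ x in Icc (0:ℝ) t, Kc * x ^ (n-1) = Kc * (t ^ n / n) := by
      rw [MeasureTheory.integral_const_mul, integral_Icc_eq_integral_Ioc,
        ← intervalIntegral.integral_of_le htpos.le, integral_pow,
        Nat.sub_add_cancel hn, zero_pow (show n ≠ 0 by omega)]
      push_cast [Nat.cast_sub hn]
      ring
    rw [hIval, gammaPDF_of_nonneg (le_of_lt htpos)]
    congr 1
    have hg1 : Real.Gamma ((n:ℝ) + 1) = n * Real.Gamma n := Real.Gamma_add_one hn0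
    rw [show (((n+1 : ℕ)):ℝ) = (n:ℝ) + 1 by push_cast; ring]
    rw [show ((n:ℝ) + 1 - 1) = ((n : ℕ) : ℝ) by ring]
    rw [show ((1:ℝ)/2) ^ ((n:ℝ)+1) = ((1:ℝ)/2) ^ ((((n+1):ℕ)):ℝ) by push_cast; ring_nf]
    rw [Real.rpow_natCast, Real.rpow_natCast, hg1, hKc]
    field_simp


lemma my_base : Measure.map (fun a : ℝ => -2 * Real.log a) (volume.restrict (Ioo (0:ℝ) 1))
    = gammaMeasure 1 (1/2) := by
  have hmeas : Measurable fun a : ℝ => -2 * Real.log a := Real.measurable_log.const_mul _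
  haveI : IsFiniteMeasure (Measure.map (fun a : ℝ => -2 * Real.log a)
      (volume.restrict (Ioo (0:ℝ) 1))) := by
    constructor
    rw [Measure.map_apply hmeas MeasurableSet.univ]
    exact lt_of_le_of_lt (measure_mono (Set.subset_univ _)) (by simp [Real.volume_Ioo])
  refine Measure.ext_of_Iic _ _ fun t => ?_
  rw [Measure.map_apply hmeas measurableSet_Iic,
    Measure.restrict_apply (hmeas measurableSet_Iic)]
  have hset : (fun a : ℝ => -2 * Real.log a) ⁻¹' (Iic t) ∩ Ioo 0 1
      = Ico (Real.exp (-(1/2 * t))) 1 := by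
    ext a
    simp only [Set.mem_inter_iff, Set.mem_preimage, Set.mem_Iic, Set.mem_Ioo, Set.mem_Ico]
    constructor
    · rintro ⟨hle, h0, h1⟩
      refine ⟨?_, h1⟩
      have hlog : -(1/2 * t) ≤ Real.log a := by linarith
      calc Real.exp (-(1/2*t)) ≤ Real.exp (Real.log a) := Real.exp_le_exp.mpr hlog
        _ = a := Real.exp_log h0
    · rintro ⟨hge, h1⟩
      have h0 : 0 < a := lt_of_lt_of_le (Real.exp_pos _) hge
      have hlog : -(1/2 * t) ≤ Real.log a := (Real.le_log_iff_exp_le h0).mpr hge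
      exact ⟨by linarith, h0, h1⟩
  rw [hset, Real.volume_Ico]
  rw [gammaMeasure, withDensity_apply _ measurableSet_Iic]
  have hrfl : ∫⁻ y in Iic t, gammaPDF 1 (1/2) y = ∫⁻ y in Iic t, exponentialPDF (1/2) y := rfl
  rw [hrfl, lintegral_exponentialPDF_eq_antiDeriv (by norm_num) t]
  split_ifs with h
  · congr 1
  · rw [ENNReal.ofReal_zero, ENNReal.ofReal_eq_zero]
    have h1 : 1 ≤ Real.exp (-(1/2*t)) := Real.one_le_exp (by nlinarith [not_le.mp h])
    linarith


lemma my_gamma_conv (n : ℕ) (hn : 1 ≤ n) :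
    Measure.conv (gammaMeasure n (1/2)) (gammaMeasure 1 (1/2))
      = gammaMeasure ((n+1:ℕ)) (1/2) := by
  rw [show gammaMeasure (n:ℝ) (1/2) = volume.withDensity (gammaPDF n (1/2)) from rfl,
    show gammaMeasure 1 (1/2) = volume.withDensity (gammaPDF 1 (1/2)) from rfl,
    my_conv_withDensity (my_measurable_gammaPDF _ _) (my_measurable_gammaPDF _ _)]
  exact withDensity_congr_ae (my_gammaPDF_conv n hn)

end FisherAux

/-- **Fisher's combination under the null.**
If `p_1, …, p_N` are i.i.d. uniform on `(0,1)`, then `T = −2 ∑ log p_i` is chi-squared with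
`2N` degrees of freedom: the pushforward of the `N`-fold product of the uniform measure on
`(0,1)` under `x ↦ −2 ∑ᵢ log xᵢ` is the Gamma distribution with shape `N` and rate `1/2`. -/
theorem fisher_combination_chi_squared (N : ℕ) (hN : 1 ≤ N) :
    Measure.map (fun x : Fin N → ℝ => -2 * ∑ i, Real.log (x i))
      (Measure.pi fun _ : Fin N => volume.restrict (Set.Ioo (0 : ℝ) 1)) =
      gammaMeasure N (1 / 2) := by
  haveI hprob : IsProbabilityMeasure (volume.restrict (Set.Ioo (0:ℝ) 1)) :=
    ⟨by simp⟩
  have hg : Measurable fun a : ℝ => -2 * Real.log a := Real.measurable_log.const_mul _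
  induction N, hN using Nat.le_induction with
  | base =>
    have hfeq : (fun x : Fin 1 → ℝ => -2 * ∑ i, Real.log (x i))
        = (fun a : ℝ => -2 * Real.log a) ∘ (MeasurableEquiv.funUnique (Fin 1) ℝ) := by
      funext x
      simp [MeasurableEquiv.funUnique, Equiv.funUnique, Fin.sum_univ_one]
    rw [hfeq, ← Measure.map_map hg (MeasurableEquiv.measurable _)]
    erw [(measurePreserving_funUnique _ (Fin 1)).map_eq,
      my_base]
    norm_num
  | succ n hn IH =>
    have hh : Measurable fun y : Fin n → ℝ => -2 * ∑ i, Real.log (y i) := by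
      apply Measurable.const_mul
      exact Finset.measurable_sum _ fun i _ => Real.measurable_log.comp (measurable_pi_apply i)
    set e := MeasurableEquiv.piFinSuccAbove (fun _ : Fin (n+1) => ℝ) 0 with he
    have hpres := measurePreserving_piFinSuccAbove
      (fun _ : Fin (n+1) => volume.restrict (Set.Ioo (0:ℝ) 1)) 0
    have hfeq : (fun x : Fin (n+1) → ℝ => -2 * ∑ i, Real.log (x i))
        = (fun p : ℝ × (Fin n → ℝ) =>
            (-2 * Real.log p.1) + (-2 * ∑ i, Real.log (p.2 i))) ∘ e := by
      funext x
      show -2 * ∑ i, Real.log (x i)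
          = -2 * Real.log (x 0) + -2 * ∑ j : Fin n, Real.log (x ((0:Fin (n+1)).succAbove j))
      rw [Fin.sum_univ_succ]
      simp only [Fin.succAbove_zero]
      ring
    have hF : Measurable fun p : ℝ × (Fin n → ℝ) =>
        (-2 * Real.log p.1) + (-2 * ∑ i, Real.log (p.2 i)) :=
      (hg.comp measurable_fst).add (hh.comp measurable_snd)
    rw [hfeq, ← Measure.map_map hF e.measurable, hpres.map_eq]
    have hsplit : (fun p : ℝ × (Fin n → ℝ) =>
          (-2 * Real.log p.1) + (-2 * ∑ i, Real.log (p.2 i)))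
        = (fun p : ℝ × ℝ => p.1 + p.2) ∘ (Prod.map (fun a : ℝ => -2 * Real.log a)
            (fun y : Fin n → ℝ => -2 * ∑ i, Real.log (y i))) := rfl
    rw [hsplit, ← Measure.map_map measurable_add (hg.prodMap hh),
      ← Measure.map_prod_map _ _ hg hh, my_base, IH]
    haveI h1 : IsProbabilityMeasure (gammaMeasure 1 (1/2)) :=
      isProbabilityMeasure_gammaMeasure one_pos (by norm_num)
    haveI h2 : IsProbabilityMeasure (gammaMeasure (n:ℝ) (1/2)) :=
      isProbabilityMeasure_gammaMeasure (by exact_mod_cast Nat.pos_of_ne_zero (by omega)) (by norm_num)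
    have : Measure.map (fun p : ℝ × ℝ => p.1 + p.2)
          ((gammaMeasure 1 (1/2)).prod (gammaMeasure (n:ℝ) (1/2)))
        = Measure.conv (gammaMeasure 1 (1/2)) (gammaMeasure (n:ℝ) (1/2)) := rfl
    rw [this, Measure.conv_comm, my_gamma_conv n hn]
end
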